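/- A projective d-tree has no crossing arcs: there do not exist two arcs (h,m) and (h',m') such that exactly one of the two endpoints h', m' lies strictly between h and m (i.e., min(h,m) < x < max(h,m) holds for exactly one x ∈ {h',m'}, and neither h' nor m' equals h or m). -/

import Mathlib

/-- A (plain, unlabeled) dependency tree on positions `{1,…,L}`: a directed rooted
tree whose vertex set is `{1,…,L}`, given by the parent map `par` (so `par m = some h`
means there is an arc from head `h` to modifier `m`); every vertex is reachable from
the root. -/
structure DTree (L : ℕ) : Type where
  root : Fin L
  par : Fin L → Option (Fin L)
  root_par : par root = none
  reach : ∀ v : Fin L, Relation.ReflTransGen (fun a b => par b = some a) root v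

namespace DTree

variable {L : ℕ}

/-- The arc relation: `h` is the head of `m`. -/
def arc (D : DTree L) (h m : Fin L) : Prop := D.par m = some h

/-- Projectivity: for every arc `(h,m)`, every position strictly between `h` and `m`
is reachable from `h` by a directed path. -/
def Projective (D : DTree L) : Prop :=
  ∀ h m, D.arc h m → ∀ d : Fin L, min h m < d → d < max h m →
    Relation.ReflTransGen D.arc h d

end DTree

section Aux

variable {L : ℕ} (D : DTree L)

private def gstep (D : DTree L) (o : Option (Fin L)) : Option (Fin L) := o.bind D.par

private lemma gstep_none (k : ℕ) : (gstep D)^[k] none = none := by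
  induction k with
  | zero => rfl
  | succ k ih => rw [Function.iterate_succ_apply, show gstep D none = none from rfl, ih]

private lemma gstep_some (b : Fin L) : gstep D (some b) = D.par b := rfl

private lemma up {a b : Fin L} (hab : Relation.ReflTransGen D.arc a b) :
    b = a ∨ ∃ k, (gstep D)^[k+1] (some b) = some a := by
  induction hab with
  | refl => exact Or.inl rfl
  | @tail c b hac hcb ih =>
    right
    have hgb : gstep D (some b) = some c := hcb
    rcases ih with rfl | ⟨k, hk⟩
    · exact ⟨0, hgb⟩
    · exact ⟨k + 1, by rw [Function.iterate_succ_apply, hgb, hk]⟩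

private lemma cycle_iter {b : Fin L} {n : ℕ} (hn : (gstep D)^[n] (some b) = some b) :
    ∀ t, (gstep D)^[t * n] (some b) = some b := by
  intro t
  induction t with
  | zero => simp
  | succ t ih =>
    rw [Nat.succ_mul, Function.iterate_add_apply, hn, ih]

private lemma anc_antisymm {a b : Fin L} (hab : Relation.ReflTransGen D.arc a b)
    (hba : Relation.ReflTransGen D.arc b a) : a = b := by
  by_contra hne
  rcases up D hab with rfl | ⟨k, hk⟩
  · exact hne rfl
  rcases up D hba with rfl | ⟨j, hj⟩
  · exact hne rfl
  have hcyc : (gstep D)^[(j+1) + (k+1)] (some b) = some b := by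
    rw [Function.iterate_add_apply, hk, hj]
  set n := (j+1) + (k+1) with hndef
  have hnpos : 1 ≤ n := by omega
  -- upward from b we eventually hit root and then none
  have hreach : Relation.ReflTransGen D.arc D.root b := D.reach b
  have hnone : ∃ N, (gstep D)^[N] (some b) = none := by
    rcases up D hreach with rfl | ⟨N, hN⟩
    · exact ⟨1, by rw [Function.iterate_one, gstep_some, D.root_par]⟩
    · refine ⟨N + 2, ?_⟩
      rw [Function.iterate_succ_apply', hN, gstep_some, D.root_par]
  rcases hnone with ⟨N, hN⟩
  have habs : (gstep D)^[(N+1) * n] (some b) = none := by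
    have : (N+1) * n = ((N+1) * n - N) + N := by
      have : N ≤ (N+1) * n := by nlinarith
      omega
    rw [this, Function.iterate_add_apply, hN, gstep_none]
  rw [cycle_iter D hcyc (N+1)] at habs
  exact Option.some_ne_none _ habs

private lemma step_to_head {h m a : Fin L} (a1 : D.arc h m)
    (hr : Relation.ReflTransGen D.arc a m) (hne : a ≠ m) :
    Relation.ReflTransGen D.arc a h := by
  rcases hr.cases_tail with rfl | ⟨c, hac, hcm⟩
  · exact absurd rfl hne
  · have : c = h := by
      have := hcm.symm.trans a1
      exact Option.some_injective _ this
    exact this ▸ hac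

private lemma finish {h m h' e : Fin L} (a1 : D.arc h m)
    (hhh' : Relation.ReflTransGen D.arc h h') (hn1 : h' ≠ h) (hn2 : h' ≠ m)
    (he : Relation.ReflTransGen D.arc h' e) (heo : e = h ∨ e = m) : False := by
  rcases heo with heq | heq
  · subst heq
    exact hn1 (anc_antisymm D hhh' he).symm
  · subst heq
    exact hn1 (anc_antisymm D hhh' (step_to_head D a1 he hn2)).symm

end Aux

/-- A projective d-tree has no crossing arcs: there are no two arcs
`(h,m)` and `(h',m')` such that exactly one of the two endpoints `h'`, `m'` lies
strictly between `h` and `m`, and neither `h'` nor `m'` equals `h` or `m`. -/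
theorem stmt8 (L : ℕ) (D : DTree L) (hproj : D.Projective) :
    ¬ ∃ h m h' m' : Fin L, D.arc h m ∧ D.arc h' m' ∧
        Xor' (min h m < h' ∧ h' < max h m) (min h m < m' ∧ m' < max h m) ∧
        h' ≠ h ∧ h' ≠ m ∧ m' ≠ h ∧ m' ≠ m := by
  rintro ⟨h, m, h', m', a1, a2, hx, n1, n2, n3, n4⟩
  rcases hx with ⟨⟨hi1, hi2⟩, hout⟩ | ⟨⟨hi1, hi2⟩, hout⟩
  · -- h' strictly inside, m' outside
    have hhh' : Relation.ReflTransGen D.arc h h' := hproj h m a1 h' hi1 hi2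
    have hout' : m' < min h m ∨ max h m < m' := by
      rcases not_and_or.mp hout with hle | hle
      · left
        refine lt_of_le_of_ne (not_lt.mp hle) ?_
        rcases min_choice h m with hc | hc <;> rw [hc] <;> [exact n3; exact n4]
      · right
        refine lt_of_le_of_ne ?_ ?_
        · exact not_lt.mp hle
        rcases max_choice h m with hc | hc <;> rw [hc] <;>
          [exact fun e => n3 e.symm; exact fun e => n4 e.symm]
    rcases hout' with hlt | hlt
    · -- e := min h m strictly between m' and h'
      have he : Relation.ReflTransGen D.arc h' (min h m) := by
        refine hproj h' m' a2 (min h m) ?_ ?_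
        · exact lt_of_le_of_lt (min_le_right h' m') hlt
        · exact lt_of_lt_of_le hi1 (le_max_left h' m')
      exact finish D a1 hhh' n1 n2 he (min_choice h m)
    · have he : Relation.ReflTransGen D.arc h' (max h m) := by
        refine hproj h' m' a2 (max h m) ?_ ?_
        · exact lt_of_le_of_lt (min_le_left h' m') hi2
        · exact lt_of_lt_of_le hlt (le_max_right h' m')
      exact finish D a1 hhh' n1 n2 he (max_choice h m)
  · -- m' strictly inside, h' outside
    have hhm' : Relation.ReflTransGen D.arc h m' := hproj h m a1 m' hi1 hi2
    have hhh' : Relation.ReflTransGen D.arc h h' :=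
      step_to_head D a2 hhm' (fun e => n3 e.symm)
    have hout' : h' < min h m ∨ max h m < h' := by
      rcases not_and_or.mp hout with hle | hle
      · left
        refine lt_of_le_of_ne (not_lt.mp hle) ?_
        rcases min_choice h m with hc | hc <;> rw [hc] <;> [exact n1; exact n2]
      · right
        refine lt_of_le_of_ne ?_ ?_
        · exact not_lt.mp hle
        rcases max_choice h m with hc | hc <;> rw [hc] <;>
          [exact fun e => n1 e.symm; exact fun e => n2 e.symm]
    rcases hout' with hlt | hlt
    · have he : Relation.ReflTransGen D.arc h' (min h m) := by
        refine hproj h' m' a2 (min h m) ?_ ?_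
        · exact lt_of_le_of_lt (min_le_left h' m') hlt
        · exact lt_of_lt_of_le hi1 (le_max_right h' m')
      exact finish D a1 hhh' n1 n2 he (min_choice h m)
    · have he : Relation.ReflTransGen D.arc h' (max h m) := by
        refine hproj h' m' a2 (max h m) ?_ ?_
        · exact lt_of_le_of_lt (min_le_right h' m') hi2
        · exact lt_of_lt_of_le hlt (le_max_left h' m')
      exact finish D a1 hhh' n1 n2 he (max_choice h m)
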